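/- Suppose nonnegative reals $a_\upsilon$, $\upsilon = 0,\dots,V-1$, satisfy $a_\upsilon \le 4\beta^2 c^2 \upsilon \sum_{s=0}^{\upsilon-1} a_s + 4\beta^2 c^2 \upsilon^2 B + 2\beta^2 \upsilon^2 q^2$ for each $\upsilon$, where $\beta, c, B, q \ge 0$ and $2\beta^2 c^2 V(V-1) < 1$. Then $\frac{1}{V}\sum_{\upsilon=0}^{V-1} a_\upsilon \le \frac{2\beta^2 c^2 (V-1)(2V-1)}{3(1 - 2\beta^2 c^2 V(V-1))} B + \frac{\beta^2 q^2 (V-1)(2V-1)}{3(1 - 2\beta^2 c^2 V(V-1))}$. -/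

import Mathlib

open Finset

lemma sum_id_real (n : ℕ) : ∑ υ ∈ range n, (υ : ℝ) = n * (n - 1) / 2 := by
  induction n with
  | zero => simp
  | succ k ih => rw [Finset.sum_range_succ, ih]; push_cast; ring

lemma sum_sq_real (n : ℕ) : ∑ υ ∈ range n, (υ : ℝ) ^ 2 = n * (n - 1) * (2 * n - 1) / 6 := by
  induction n with
  | zero => simp
  | succ k ih => rw [Finset.sum_range_succ, ih]; push_cast; ring

theorem stmt_13 (V : ℕ) (hV : 1 ≤ V) (a : ℕ → ℝ) (β c B q : ℝ)
    (hβ : 0 ≤ β) (hc : 0 ≤ c) (hB : 0 ≤ B) (hq : 0 ≤ q)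
    (ha : ∀ υ < V, 0 ≤ a υ)
    (hsmall : 2 * β ^ 2 * c ^ 2 * V * (V - 1) < 1)
    (hrec : ∀ υ < V, a υ ≤ 4 * β ^ 2 * c ^ 2 * υ * ∑ s ∈ range υ, a s
        + 4 * β ^ 2 * c ^ 2 * (υ : ℝ) ^ 2 * B + 2 * β ^ 2 * (υ : ℝ) ^ 2 * q ^ 2) :
    (V : ℝ)⁻¹ * ∑ υ ∈ range V, a υ ≤
      2 * β ^ 2 * c ^ 2 * ((V : ℝ) - 1) * (2 * V - 1)
        / (3 * (1 - 2 * β ^ 2 * c ^ 2 * V * (V - 1))) * B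
      + β ^ 2 * q ^ 2 * ((V : ℝ) - 1) * (2 * V - 1)
        / (3 * (1 - 2 * β ^ 2 * c ^ 2 * V * (V - 1))) := by
  set S := ∑ υ ∈ range V, a υ with hSdef
  have hVpos : (0 : ℝ) < V := by exact_mod_cast Nat.pos_of_ne_zero (by omega)
  have hS0 : 0 ≤ S := Finset.sum_nonneg fun i hi => ha i (Finset.mem_range.mp hi)
  have hpart : ∀ υ < V, ∑ s ∈ range υ, a s ≤ S := by
    intro υ hυ
    exact Finset.sum_le_sum_of_subset_of_nonneg
      (Finset.range_subset_range.mpr hυ.le)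
      (fun i hi _ => ha i (Finset.mem_range.mp hi))
  -- summed recursion
  have hsum : S ≤ ∑ υ ∈ range V, (4 * β ^ 2 * c ^ 2 * υ * S
      + 4 * β ^ 2 * c ^ 2 * (υ : ℝ) ^ 2 * B + 2 * β ^ 2 * (υ : ℝ) ^ 2 * q ^ 2) := by
    rw [hSdef]
    apply Finset.sum_le_sum
    intro υ hυ
    have hυV := Finset.mem_range.mp hυ
    refine (hrec υ hυV).trans ?_
    have h1 : 4 * β ^ 2 * c ^ 2 * υ * ∑ s ∈ range υ, a s ≤ 4 * β ^ 2 * c ^ 2 * υ * S := by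
      apply mul_le_mul_of_nonneg_left (hpart υ hυV)
      positivity
    linarith
  have hsum2 : S ≤ 4 * β ^ 2 * c ^ 2 * (V * (V - 1) / 2) * S
      + (4 * β ^ 2 * c ^ 2 * B + 2 * β ^ 2 * q ^ 2) * (V * (V - 1) * (2 * V - 1) / 6) := by
    have expand : ∑ υ ∈ range V, (4 * β ^ 2 * c ^ 2 * υ * S
        + 4 * β ^ 2 * c ^ 2 * (υ : ℝ) ^ 2 * B + 2 * β ^ 2 * (υ : ℝ) ^ 2 * q ^ 2)
        = 4 * β ^ 2 * c ^ 2 * S * (∑ υ ∈ range V, (υ : ℝ))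
          + (4 * β ^ 2 * c ^ 2 * B + 2 * β ^ 2 * q ^ 2) * (∑ υ ∈ range V, (υ : ℝ) ^ 2) := by
      simp only [Finset.mul_sum, ← Finset.sum_add_distrib]
      exact Finset.sum_congr rfl fun υ _ => by ring
    rw [expand, sum_id_real, sum_sq_real] at hsum
    linarith
  have hden : (0 : ℝ) < 3 * (1 - 2 * β ^ 2 * c ^ 2 * V * (V - 1)) := by linarith
  rw [inv_mul_eq_div, div_mul_eq_mul_div, ← add_div, div_le_div_iff₀ hVpos hden]
  nlinarith [hsum2, hVpos, mul_le_mul_of_nonneg_left hsum2 (le_of_lt hVpos)]
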